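/- Let θ < λ be regular cardinals and D a locally downward coherent θ-covering matrix for λ. Suppose κ < λ is a cardinal such that either κ = θ^{+η} for some ordinal η < θ, or κ^θ < λ. Then for every Y ⊆ λ with |Y| = κ there is γ_Y < λ such that for every i < θ and β < λ there is j < θ with D(i,β) ∩ Y ⊆ D(j,γ_Y). -/

import Mathlib

noncomputable section

universe u

open Cardinal Set

/-- The order type of a set of ordinals: the unique ordinal `o` such that `s` is
order-isomorphic to `Set.Iio o` (and `0` if there is no such ordinal). -/
def otp (s : Set Ordinal) : Ordinal :=
  sInf {o : Ordinal | Nonempty (s ≃o Set.Iio o)}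

/-- `A` is unbounded in `β`. -/
def IsUnboundedIn (A : Set Ordinal) (β : Ordinal) : Prop :=
  ∀ γ < β, ∃ δ ∈ A, γ ≤ δ

/-- `γ` is a limit of elements of `C`. -/
def IsAccPt (C : Set Ordinal) (γ : Ordinal) : Prop :=
  ∀ δ < γ, ∃ ε ∈ C, δ < ε ∧ ε < γ

/-- `C` is club in `β`: a subset of `β`, unbounded in `β`, and closed under limits below `β`. -/
def IsClubIn (C : Set Ordinal) (β : Ordinal) : Prop :=
  C ⊆ Set.Iio β ∧ IsUnboundedIn C β ∧ ∀ γ < β, 0 < γ → IsAccPt C γ → γ ∈ C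

/-- `S` is stationary in `β`: it meets every club in `β`. -/
def IsStationaryIn (S : Set Ordinal) (β : Ordinal) : Prop :=
  ∀ C, IsClubIn C β → (S ∩ C).Nonempty

/-- `D` is a `θ`-covering matrix for `lam`. -/
def IsCoveringMatrix (θ lam : Cardinal) (D : Ordinal → Ordinal → Set Ordinal) : Prop :=
  (∀ β < lam.ord, (⋃ i ∈ Set.Iio θ.ord, D i β) = Set.Iio β) ∧
  (∀ β < lam.ord, ∀ i j, i < j → j < θ.ord → D i β ⊆ D j β) ∧
  (∀ β γ, β < γ → γ < lam.ord → ∀ i < θ.ord, ∃ j < θ.ord, D i β ⊆ D j γ)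

/-- `D` is transitive. -/
def TransitiveMatrix (θ lam : Cardinal) (D : Ordinal → Ordinal → Set Ordinal) : Prop :=
  ∀ α β, α < β → β < lam.ord → ∀ i < θ.ord, α ∈ D i β → D i α ⊆ D i β

/-- `D` is uniform: every limit `β < lam` has some `D i β` containing a club in `β`. -/
def UniformMatrix (θ lam : Cardinal) (D : Ordinal → Ordinal → Set Ordinal) : Prop :=
  ∀ β < lam.ord, Order.IsSuccLimit β → ∃ i < θ.ord, ∃ C ⊆ D i β, IsClubIn C β

/-- `D` is normal: the order types of its entries are bounded below `lam`. -/
def NormalMatrix (θ lam : Cardinal) (D : Ordinal → Ordinal → Set Ordinal) : Prop :=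
  ∃ b < lam.ord, ∀ i < θ.ord, ∀ γ < lam.ord, otp (D i γ) < b

/-- `β_D`: the least ordinal strictly above the order types of all entries of `D`. -/
def matrixBound (θ lam : Cardinal) (D : Ordinal → Ordinal → Set Ordinal) : Ordinal :=
  sInf {b | ∀ i < θ.ord, ∀ γ < lam.ord, otp (D i γ) < b}

/-- `D` is downward coherent. -/
def DownwardCoherent (θ lam : Cardinal) (D : Ordinal → Ordinal → Set Ordinal) : Prop :=
  ∀ α β, α < β → β < lam.ord → ∀ i < θ.ord, ∃ j < θ.ord, D i β ∩ Set.Iio α ⊆ D j α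

/-- `D` is locally downward coherent. -/
def LocallyDownwardCoherent (θ lam : Cardinal.{u})
    (D : Ordinal.{u} → Ordinal.{u} → Set Ordinal.{u}) : Prop :=
  ∀ X : Set Ordinal.{u}, X ⊆ Set.Iio lam.ord → #X ≤ Cardinal.lift.{u + 1} θ →
    ∃ γX < lam.ord, ∀ β < lam.ord, ∀ i < θ.ord, ∃ j < θ.ord,
      X ∩ D i β ⊆ X ∩ D j γX

/-- `D` is strongly locally downward coherent. -/
def StronglyLocallyDownwardCoherent (θ lam : Cardinal.{u})
    (D : Ordinal.{u} → Ordinal.{u} → Set Ordinal.{u}) : Prop :=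
  ∀ X : Set Ordinal.{u}, X ⊆ Set.Iio lam.ord → #X ≤ Cardinal.lift.{u + 1} θ →
    ∃ γX < lam.ord, ∀ β, γX ≤ β → β < lam.ord →
      ∃ i < θ.ord, ∀ j, i ≤ j → j < θ.ord → X ∩ D j β = X ∩ D j γX

/-- `D` covers `[T]^κ`. -/
def Covers (θ lam : Cardinal.{u}) (D : Ordinal.{u} → Ordinal.{u} → Set Ordinal.{u})
    (T : Set Ordinal.{u}) (κ : Cardinal.{u}) : Prop :=
  ∀ X ⊆ T, #X = Cardinal.lift.{u + 1} κ → ∃ i < θ.ord, ∃ β < lam.ord, X ⊆ D i β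

/-- The covering property `CP(D)`. -/
def CP (θ lam : Cardinal) (D : Ordinal → Ordinal → Set Ordinal) : Prop :=
  ∃ T ⊆ Set.Iio lam.ord, IsUnboundedIn T lam.ord ∧ Covers θ lam D T θ

/-- `CP(lam, θ)`: `CP(D)` holds for every locally downward coherent `θ`-covering matrix `D`. -/
def CPAll (θ lam : Cardinal) : Prop :=
  ∀ D, IsCoveringMatrix θ lam D → LocallyDownwardCoherent θ lam D → CP θ lam D

/-- `A_D`: the set of good points for `D`. -/
def goodPoints (θ lam : Cardinal) (D : Ordinal → Ordinal → Set Ordinal) : Set Ordinal :=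
  {β | β < lam.ord ∧ θ < Ordinal.cof β ∧
    ∃ A ⊆ Set.Iio β, IsUnboundedIn A β ∧
      ∀ γ < β, ∃ α < β, ∃ i < θ.ord, A ∩ Set.Iio γ ⊆ D i α}

/-- `θ^{+η}`: the `η`-th iterated cardinal successor of `θ`. -/
def iterSucc (θ : Cardinal) (η : Ordinal) : Cardinal :=
  Ordinal.limitRecOn η θ (fun _ ih => Order.succ ih)
    (fun o _ ih => ⨆ i : Set.Iio o, ih i.1 i.2)

/-- `f <* g` mod bounded subsets of `θ`. -/
def ltStar (θ : Cardinal) (f g : Ordinal → Ordinal) : Prop :=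
  ∃ i < θ.ord, ∀ j, i ≤ j → j < θ.ord → f j < g j

/-- `⟨f β : β < δ⟩` is a club-increasing sequence of functions from `θ` to the ordinals. -/
def ClubIncreasing (θ : Cardinal) (δ : Ordinal) (f : Ordinal → Ordinal → Ordinal) : Prop :=
  (∀ β < δ, ∀ i j, i ≤ j → j < θ.ord → f β i ≤ f β j) ∧
  (∀ α β, α < β → β < δ → ltStar θ (f α) (f β)) ∧
  (∀ β < δ, θ < Ordinal.cof β → ∃ C, IsClubIn C β ∧ ∃ i < θ.ord,
    ∀ α ∈ C, ∀ j, i ≤ j → j < θ.ord → f α j < f β j)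

/-- `γ_f`: the least ordinal strictly above all values of the sequence. -/
def seqBound (θ : Cardinal) (δ : Ordinal) (f : Ordinal → Ordinal → Ordinal) : Ordinal :=
  sInf {γ | ∀ β < δ, ∀ i < θ.ord, f β i < γ}

/-- `g` is an exact upper bound for `⟨f β : β < δ⟩` with respect to `<*` on `θ`. -/
def IsEub (θ : Cardinal) (δ : Ordinal) (f : Ordinal → Ordinal → Ordinal)
    (g : Ordinal → Ordinal) : Prop :=
  (∀ β < δ, ltStar θ (f β) g) ∧
  ∀ h : Ordinal → Ordinal, ltStar θ h g → ∃ β < δ, ltStar θ h (f β)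

/-- The simultaneous stationary reflection principle `R(lam, θ)`. -/
def RPrinciple (lam θ : Cardinal) : Prop :=
  ∃ S ⊆ Set.Iio lam.ord, IsStationaryIn S lam.ord ∧
    ∀ T : Ordinal → Set Ordinal,
      (∀ j < θ.ord, T j ⊆ S ∧ IsStationaryIn (T j) lam.ord) →
      ∃ α < lam.ord, ℵ₀ < Ordinal.cof α ∧
        ∀ j < θ.ord, IsStationaryIn (T j ∩ Set.Iio α) α

/-- A `□_κ`-sequence. -/
def IsSquareSeq (κ : Cardinal) (C : Ordinal → Set Ordinal) : Prop :=
  ∀ β < (Order.succ κ).ord, Order.IsSuccLimit β →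
    IsClubIn (C β) β ∧ otp (C β) ≤ κ.ord ∧
    ∀ α ∈ C β, 0 < α → IsAccPt (C β) α → C β ∩ Set.Iio α = C α

/-- The square principle `□_κ`. -/
def SquarePrinciple (κ : Cardinal) : Prop := ∃ C, IsSquareSeq κ C

/-- `f <* g` mod finite on `B ⊆ ω`. -/
def ltStarB (B : Set ℕ) (f g : ℕ → Ordinal) : Prop :=
  ∃ m, ∀ n ∈ B, m ≤ n → f n < g n

/-- `g` is an exact upper bound for `⟨f α : α < δ⟩` with respect to `<*` mod finite on `B`. -/
def IsEubB (B : Set ℕ) (δ : Ordinal) (f : Ordinal → ℕ → Ordinal) (g : ℕ → Ordinal) : Prop :=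
  (∀ α < δ, ltStarB B (f α) g) ∧
  ∀ h : ℕ → Ordinal, ltStarB B h g → ∃ α < δ, ltStarB B h (f α)

/-- A scale of length `ℵ_{ω+1}` in `∏_{n ∈ B} ℵ_n`. -/
def IsScale (B : Set ℕ) (f : Ordinal → ℕ → Ordinal) : Prop :=
  (∀ α < (Cardinal.aleph (Ordinal.omega0 + 1)).ord, ∀ n ∈ B, f α n < (Cardinal.aleph n).ord) ∧
  (∀ α β, α < β → β < (Cardinal.aleph (Ordinal.omega0 + 1)).ord → ltStarB B (f α) (f β)) ∧
  (∀ g : ℕ → Ordinal, (∀ n ∈ B, g n < (Cardinal.aleph n).ord) →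
    ∃ α < (Cardinal.aleph (Ordinal.omega0 + 1)).ord, ltStarB B g (f α))



section Aux

open Ordinal

instance (o : Ordinal.{u}) : IsWellOrder o.ToType (· < ·) := isWellOrder_lt

theorem iterSucc_zero (θ : Cardinal) : iterSucc θ 0 = θ :=
  Ordinal.limitRecOn_zero _ _ _

theorem iterSucc_succ (θ : Cardinal) (η : Ordinal) :
    iterSucc θ (Order.succ η) = Order.succ (iterSucc θ η) :=
  Ordinal.limitRecOn_succ _ _ _ _

theorem iterSucc_limit (θ : Cardinal.{u}) {η : Ordinal.{u}} (h : Order.IsSuccLimit η) :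
    iterSucc θ η = ⨆ i : Set.Iio η, iterSucc θ i.1 := by
  rw [iterSucc, Ordinal.limitRecOn_limit _ _ _ _ h]
  rfl

theorem iterSucc_lt_iterSucc (θ : Cardinal.{u}) :
    ∀ η : Ordinal.{u}, ∀ ζ < η, iterSucc θ ζ < iterSucc θ η := by
  intro η
  induction η using Ordinal.induction with
  | _ η IH =>
    intro ζ hζ
    rcases Ordinal.zero_or_succ_or_isSuccLimit η with h0 | ⟨a, rfl⟩ | hl
    · subst h0; exact absurd hζ (not_lt_zero (a := ζ))
    · rw [iterSucc_succ]
      rcases lt_or_eq_of_le (Order.lt_succ_iff.mp hζ) with h | rfl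
      · exact (IH a (Order.lt_succ a) ζ h).trans (Order.lt_succ _)
      · exact Order.lt_succ _
    · rw [iterSucc_limit θ hl]
      have h1 : iterSucc θ ζ < iterSucc θ (Order.succ ζ) := by
        rw [iterSucc_succ]; exact Order.lt_succ _
      exact h1.trans_le (le_ciSup (Cardinal.bddAbove_range _)
        (⟨Order.succ ζ, hl.succ_lt hζ⟩ : Set.Iio η))

theorem le_iterSucc (θ : Cardinal.{u}) (η : Ordinal.{u}) : θ ≤ iterSucc θ η := by
  rcases eq_or_lt_of_le (zero_le (a := η)) with h | h
  · rw [← h, iterSucc_zero]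
  · calc θ = iterSucc θ 0 := (iterSucc_zero θ).symm
      _ ≤ iterSucc θ η := (iterSucc_lt_iterSucc θ η 0 h).le

/-- Bounding a `Type u`-indexed family of ordinals below a regular cardinal. -/
theorem boundU {c : Cardinal.{u}} (hc : c.IsRegular) {ι : Type u} (hι : #ι < c)
    (g : ι → Ordinal.{u}) (hg : ∀ s, g s < c.ord) : ∃ γ < c.ord, ∀ s, g s < γ := by
  have hsup : iSup g < c.ord :=
    Ordinal.iSup_lt_ord (by rw [hc.cof_eq]; exact hι) hg
  refine ⟨iSup g + 1, ?_, fun s => ?_⟩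
  · rw [Ordinal.add_one_eq_succ]
    exact (Cardinal.isSuccLimit_ord hc.aleph0_le).succ_lt hsup
  · exact (Ordinal.le_iSup g s).trans_lt (lt_add_one _)

/-- Bounding a `Type (u+1)`-indexed family of ordinals below a regular cardinal,
provided the index has small cardinality. -/
theorem boundV {c : Cardinal.{u}} (hc : c.IsRegular) {ι : Type (u + 1)} {d : Cardinal.{u}}
    (hd : d < c) (hι : #ι ≤ Cardinal.lift.{u + 1} d) (g : ι → Ordinal.{u})
    (hg : ∀ s, g s < c.ord) : ∃ γ < c.ord, ∀ s, g s < γ := by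
  classical
  have hemb : Nonempty (ι ↪ d.ord.ToType) := by
    rw [← Cardinal.lift_mk_le']
    rwa [Cardinal.lift_id'.{u, u + 1}, Cardinal.mk_toType, Cardinal.card_ord]
  obtain ⟨F⟩ := hemb
  set f : d.ord.ToType → Ordinal.{u} := fun t => if h : ∃ s, F s = t then g h.choose else 0
    with hf_def
  have hf : ∀ t, f t < c.ord := by
    intro t
    rw [hf_def]
    dsimp only
    split
    · exact hg _
    · rw [Cardinal.lt_ord, Ordinal.card_zero]
      exact hc.aleph0_le.trans_lt' Cardinal.aleph0_pos
  have hd' : #(d.ord.ToType) < c := by rwa [Cardinal.mk_toType, Cardinal.card_ord]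
  obtain ⟨γ, hγ, hb⟩ := boundU hc hd' f hf
  refine ⟨γ, hγ, fun s => ?_⟩
  have hfs : f (F s) = g s := by
    rw [hf_def]
    dsimp only
    rw [dif_pos ⟨s, rfl⟩]
    congr 1
    exact F.injective (Exists.choose_spec (⟨s, rfl⟩ : ∃ s', F s' = F s))
  rw [← hfs]; exact hb _

/-- Endgame: to cover `D i β ∩ Y` it suffices to cover all `θ`-sized subsets. -/
theorem endgame {θ lam : Cardinal.{u}} {D : Ordinal → Ordinal → Set Ordinal}
    (Y : Set Ordinal.{u}) {γY : Ordinal}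
    (H : ∀ X : Set Ordinal.{u}, X ⊆ Y → #X ≤ Cardinal.lift.{u + 1} θ →
      ∀ i < θ.ord, ∀ β < lam.ord, X ⊆ D i β → ∃ j < θ.ord, X ⊆ D j γY) :
    ∀ i < θ.ord, ∀ β < lam.ord, ∃ j < θ.ord, D i β ∩ Y ⊆ D j γY := by
  haveI : IsWellOrder θ.ord.ToType (· < ·) := isWellOrder_lt
  intro i hi β hβ
  by_contra hcon
  push_neg at hcon
  have pick : ∀ t : θ.ord.ToType, ∃ y, y ∈ D i β ∩ Y ∧
      y ∉ D (Ordinal.typein (· < ·) t) γY := by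
    intro t
    have ht : Ordinal.typein (· < ·) t < θ.ord := by
      conv_rhs => rw [← Ordinal.type_toType θ.ord]
      exact Ordinal.typein_lt_type _ t
    obtain ⟨y, hy1, hy2⟩ := Set.not_subset.mp (hcon _ ht)
    exact ⟨y, hy1, hy2⟩
  choose y hy1 hy2 using pick
  have hXY : Set.range y ⊆ Y := by rintro _ ⟨t, rfl⟩; exact (hy1 t).2
  have hXc : #(Set.range y) ≤ Cardinal.lift.{u + 1} θ := by
    have h := Cardinal.mk_range_le_lift (f := y)
    rwa [Cardinal.lift_id'.{u, u + 1}, Cardinal.mk_toType, Cardinal.card_ord] at h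
  have hXsub : Set.range y ⊆ D i β := by rintro _ ⟨t, rfl⟩; exact (hy1 t).1
  obtain ⟨j, hj, hXj⟩ := H _ hXY hXc i hi β hβ hXsub
  have hjt : j < Ordinal.type (· < · : θ.ord.ToType → θ.ord.ToType → Prop) := by
    rw [Ordinal.type_toType]; exact hj
  have hmem := hXj (Set.mem_range_self (Ordinal.enum (· < ·) ⟨j, hjt⟩))
  have hnot := hy2 (Ordinal.enum (· < ·) ⟨j, hjt⟩)
  rw [Ordinal.typein_enum] at hnot
  exact hnot hmem

/-- The main inductive lemma: the conclusion of statement 11 for `Y` of size at most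
`θ^{+η}`, by induction on `η < θ.ord`. -/
theorem mainA (θ lam : Cardinal.{u}) (hθ : θ.IsRegular) (hlam : lam.IsRegular)
    (hθlam : θ < lam) (D : Ordinal → Ordinal → Set Ordinal) (hD : IsCoveringMatrix θ lam D)
    (hldc : LocallyDownwardCoherent θ lam D) :
    ∀ η : Ordinal.{u}, η < θ.ord → iterSucc θ η < lam →
      ∀ Y : Set Ordinal.{u}, Y ⊆ Set.Iio lam.ord →
        Cardinal.mk Y ≤ Cardinal.lift.{u + 1} (iterSucc θ η) →
        ∃ γY < lam.ord, ∀ i < θ.ord, ∀ β < lam.ord, ∃ j < θ.ord, D i β ∩ Y ⊆ D j γY := by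
  intro η
  induction η using Ordinal.induction with
  | _ η IH =>
  intro hηθ hηlam Y hYsub hYcard
  obtain ⟨ν, hν⟩ : ∃ ν : Cardinal.{u}, Cardinal.lift.{u + 1} ν = #Y :=
    Cardinal.mem_range_lift_of_le hYcard
  have hνle : ν ≤ iterSucc θ η := by
    rw [← Cardinal.lift_le.{u + 1}, hν]; exact hYcard
  by_cases hν0 : ν ≤ θ
  · -- base case: directly from local downward coherence
    obtain ⟨γX, hγX, hprop⟩ := hldc Y hYsub (by rw [← hν]; exact Cardinal.lift_le.mpr hν0)
    refine ⟨γX, hγX, fun i hi β hβ => ?_⟩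
    obtain ⟨j, hj, hs⟩ := hprop β hβ i hi
    exact ⟨j, hj, fun x hx => (hs ⟨hx.2, hx.1⟩).2⟩
  have hθν : θ < ν := not_le.mp hν0
  have hνlam : ν < lam := hνle.trans_lt hηlam
  have hνinf : ℵ₀ ≤ ν := hθ.aleph0_le.trans hθν.le
  haveI : IsWellOrder ν.ord.ToType (· < ·) := isWellOrder_lt
  obtain ⟨e⟩ : Nonempty (ν.ord.ToType ≃ Y) := by
    apply Cardinal.lift_mk_eq'.mp
    rw [Cardinal.mk_toType, Cardinal.card_ord, Cardinal.lift_id'.{u, u + 1}, hν]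
  have htype : Ordinal.type (· < · : ν.ord.ToType → ν.ord.ToType → Prop) = ν.ord :=
    Ordinal.type_toType _
  rcases Ordinal.zero_or_succ_or_isSuccLimit η with h0 | ⟨ς, rfl⟩ | hl
  · exfalso; subst h0; rw [iterSucc_zero] at hνle; exact hν0 hνle
  · -- successor case
    set μ := iterSucc θ ς with hμ
    have hςθ : ς < θ.ord := (Order.lt_succ ς).trans hηθ
    have hμη : μ < iterSucc θ (Order.succ ς) := iterSucc_lt_iterSucc θ _ ς (Order.lt_succ ς)
    have hμlam : μ < lam := hμη.trans hηlam
    by_cases hνμ : ν ≤ μ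
    · exact IH ς (Order.lt_succ ς) hςθ hμlam Y hYsub
        (by rw [← hν]; exact Cardinal.lift_le.mpr hνμ)
    have hνeq : ν = Order.succ μ := by
      rw [iterSucc_succ] at hνle
      exact le_antisymm hνle (Order.succ_le_of_lt (not_le.mp hνμ))
    have hθμ : θ ≤ μ := le_iterSucc θ ς
    have hνreg : ν.IsRegular := by
      rw [hνeq]; exact Cardinal.isRegular_succ (hθ.aleph0_le.trans hθμ)
    -- pieces
    set P : ν.ord.ToType → Set Ordinal.{u} :=
      fun x => Subtype.val '' (⇑e '' {z | z < x}) with hP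
    have hPsub : ∀ x, P x ⊆ Y := by
      rintro x _ ⟨⟨w, hw⟩, _, rfl⟩; exact hw
    have hPcard : ∀ x, #(P x) ≤ Cardinal.lift.{u + 1} μ := by
      intro x
      have hinj : Function.Injective (fun z : ν.ord.ToType => ((e z : Y) : Ordinal)) :=
        fun a b hab => e.injective (Subtype.val_injective hab)
      have himg : P x = (fun z : ν.ord.ToType => ((e z : Y) : Ordinal)) '' {z | z < x} := by
        simp only [hP, Set.image_image]
      rw [himg]
      have h1 := Cardinal.mk_image_eq_lift _ {z | z < x} hinj
      have h2 : #{z : ν.ord.ToType // z < x} = (Ordinal.typein (· < ·) x).card :=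
        (Ordinal.card_typein x).symm
      have h3 : (Ordinal.typein (· < ·) x).card ≤ μ := by
        have := Ordinal.typein_lt_type (· < ·) x
        rw [htype] at this
        exact Order.lt_succ_iff.mp ((Cardinal.lt_ord.mp this).trans_le hνeq.le)
      rw [Cardinal.lift_id'.{u, u + 1}] at h1
      rw [h1]
      calc Cardinal.lift.{u + 1} #{z : ν.ord.ToType | z < x}
          = Cardinal.lift.{u + 1} (Ordinal.typein (· < ·) x).card := by rw [← h2]; rfl
        _ ≤ Cardinal.lift.{u + 1} μ := Cardinal.lift_le.mpr h3
    have hPall : ∀ x, ∃ γ < lam.ord, ∀ i < θ.ord, ∀ β < lam.ord, ∃ j < θ.ord,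
        D i β ∩ P x ⊆ D j γ := fun x =>
      IH ς (Order.lt_succ ς) hςθ hμlam (P x) ((hPsub x).trans hYsub) (hPcard x)
    choose γ hγlt hγprop using hPall
    obtain ⟨γ0, hγ0, hγb⟩ := boundU hlam
      (by rw [Cardinal.mk_toType, Cardinal.card_ord]; exact hνlam) γ hγlt
    refine ⟨γ0, hγ0, endgame Y ?_⟩
    intro X hXY hXc i hi β hβ hXD
    -- find a single piece containing X
    have hgX : ∀ p : X, Ordinal.typein (· < ·) (e.symm ⟨p.1, hXY p.2⟩) < ν.ord := by
      intro p
      exact (Ordinal.typein_lt_type _ _).trans_eq htype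
    obtain ⟨b, hb, hbb⟩ := boundV hνreg hθν hXc
      (fun p : X => Ordinal.typein (· < ·) (e.symm ⟨p.1, hXY p.2⟩)) hgX
    have hbt : b < Ordinal.type (· < · : ν.ord.ToType → ν.ord.ToType → Prop) := by
      rw [htype]; exact hb
    set xst := Ordinal.enum (· < ·) ⟨b, hbt⟩ with hxst
    have hXP : X ⊆ P xst := by
      intro p hp
      refine ⟨e (e.symm ⟨p, hXY hp⟩), ⟨e.symm ⟨p, hXY hp⟩, ?_, rfl⟩, by simp⟩
      have := hbb ⟨p, hp⟩
      rw [← Ordinal.typein_enum (· < ·) hbt, ← hxst] at this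
      exact (Ordinal.typein_lt_typein (· < ·)).mp this
    obtain ⟨j, hj, hsub⟩ := hγprop xst i hi β hβ
    obtain ⟨j2, hj2, hsub2⟩ := hD.2.2 (γ xst) γ0 (hγb xst) hγ0 j hj
    exact ⟨j2, hj2, fun x hx => hsub2 (hsub ⟨hXD hx, hXP hx⟩)⟩
  · -- limit case
    by_cases hc : ∃ ζ, ζ < η ∧ ν ≤ iterSucc θ ζ
    · obtain ⟨ζ, hζ, hle⟩ := hc
      exact IH ζ hζ (hζ.trans hηθ) ((iterSucc_lt_iterSucc θ η ζ hζ).trans hηlam) Y hYsub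
        (by rw [← hν]; exact Cardinal.lift_le.mpr hle)
    push_neg at hc
    have hcc : ∀ ζ < η, iterSucc θ ζ < ν := hc
    haveI : IsWellOrder η.ToType (· < ·) := isWellOrder_lt
    have hηcard : η.card < θ := Cardinal.lt_ord.mp hηθ
    have htypeη : Ordinal.type (· < · : η.ToType → η.ToType → Prop) = η :=
      Ordinal.type_toType _
    -- pieces indexed by η.ToType
    set Q : η.ToType → Set Ordinal.{u} := fun z =>
      Subtype.val '' (⇑e '' {x : ν.ord.ToType |
        Ordinal.typein (· < ·) x < (iterSucc θ (Ordinal.typein (· < ·) z)).ord}) with hQ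
    have hQsub : ∀ z, Q z ⊆ Y := by
      rintro z _ ⟨⟨w, hw⟩, _, rfl⟩; exact hw
    have hzlt : ∀ z : η.ToType, Ordinal.typein (· < ·) z < η := by
      intro z; exact (Ordinal.typein_lt_type _ _).trans_eq htypeη
    have hQcard : ∀ z, #(Q z) ≤
        Cardinal.lift.{u + 1} (iterSucc θ (Ordinal.typein (· < ·) z)) := by
      intro z
      have hord : (iterSucc θ (Ordinal.typein (· < ·) z)).ord < ν.ord :=
        Cardinal.ord_lt_ord.mpr (hcc _ (hzlt z))
      have hordt : (iterSucc θ (Ordinal.typein (· < ·) z)).ord <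
          Ordinal.type (· < · : ν.ord.ToType → ν.ord.ToType → Prop) := by
        rw [htype]; exact hord
      have hset : {x : ν.ord.ToType |
          Ordinal.typein (· < ·) x < (iterSucc θ (Ordinal.typein (· < ·) z)).ord} =
          {x : ν.ord.ToType | x < Ordinal.enum (· < ·) ⟨_, hordt⟩} := by
        ext x
        simp only [Set.mem_setOf_eq]
        rw [← Ordinal.typein_lt_typein (· < ·) (a := x), Ordinal.typein_enum]
      have hinj : Function.Injective (fun x : ν.ord.ToType => ((e x : Y) : Ordinal)) :=
        fun a b hab => e.injective (Subtype.val_injective hab)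
      have himg : Q z = (fun x : ν.ord.ToType => ((e x : Y) : Ordinal)) ''
          {x : ν.ord.ToType |
            Ordinal.typein (· < ·) x < (iterSucc θ (Ordinal.typein (· < ·) z)).ord} := by
        simp only [hQ, Set.image_image]
      rw [himg, hset]
      have h1 := Cardinal.mk_image_eq_lift _
        {x : ν.ord.ToType | x < Ordinal.enum (· < ·) ⟨_, hordt⟩} hinj
      rw [Cardinal.lift_id'.{u, u + 1}] at h1
      rw [h1]
      have h2 : #{x : ν.ord.ToType // x < Ordinal.enum (· < ·) ⟨_, hordt⟩} =
          (Ordinal.typein (· < ·) (Ordinal.enum (· < ·) ⟨_, hordt⟩)).card :=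
        (Ordinal.card_typein _).symm
      have h3 : #{x : ν.ord.ToType | x < Ordinal.enum (· < ·) ⟨_, hordt⟩} =
          (iterSucc θ (Ordinal.typein (· < ·) z)) := by
        show #{x : ν.ord.ToType // x < Ordinal.enum (· < ·) ⟨_, hordt⟩} = _
        rw [h2, Ordinal.typein_enum, Cardinal.card_ord]
      rw [h3]
    have hQall : ∀ z, ∃ γ < lam.ord, ∀ i < θ.ord, ∀ β < lam.ord, ∃ j < θ.ord,
        D i β ∩ Q z ⊆ D j γ := fun z =>
      IH (Ordinal.typein (· < ·) z) (hzlt z) ((hzlt z).trans hηθ)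
        ((hcc _ (hzlt z)).trans hνlam) (Q z) ((hQsub z).trans hYsub) (hQcard z)
    choose γ hγlt hγprop using hQall
    have hηtoType : #η.ToType < lam := by
      rw [Cardinal.mk_toType]; exact (hηcard.trans hθlam)
    obtain ⟨γ0, hγ0, hγb⟩ := boundU hlam hηtoType γ hγlt
    -- coverage
    have hcover : ∀ y (hy : y ∈ Y), ∃ z, y ∈ Q z := by
      intro y hy
      set x := e.symm ⟨y, hy⟩ with hx
      have h1 : (Ordinal.typein (· < ·) x).card < ν := by
        exact Cardinal.lt_ord.mp ((Ordinal.typein_lt_type _ _).trans_eq htype)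
      have h2 : (Ordinal.typein (· < ·) x).card < ⨆ i : Set.Iio η, iterSucc θ i.1 := by
        refine h1.trans_le ?_
        rw [← iterSucc_limit θ hl]
        exact hνle
      have h3 : ∃ i : Set.Iio η, (Ordinal.typein (· < ·) x).card < iterSucc θ i.1 := by
        by_contra hno
        push_neg at hno
        have : Nonempty (Set.Iio η) := ⟨⟨0, hl.pos⟩⟩
        exact absurd (ciSup_le hno) (not_le.mpr h2)
      obtain ⟨⟨ζ, hζ⟩, h4⟩ := h3
      have hζt : ζ < Ordinal.type (· < · : η.ToType → η.ToType → Prop) := by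
        rw [htypeη]; exact hζ
      refine ⟨Ordinal.enum (· < ·) ⟨ζ, hζt⟩, ?_⟩
      refine ⟨e x, ⟨x, ?_, rfl⟩, by rw [hx]; simp⟩
      show Ordinal.typein (· < ·) x < _
      rw [Ordinal.typein_enum]
      exact Cardinal.lt_ord.mpr h4
    refine ⟨γ0, hγ0, fun i hi β hβ => ?_⟩
    have hj : ∀ z, ∃ j < θ.ord, D i β ∩ Q z ⊆ D j γ0 := by
      intro z
      obtain ⟨j, hjθ, hsub⟩ := hγprop z i hi β hβ
      obtain ⟨j2, hj2θ, hsub2⟩ := hD.2.2 (γ z) γ0 (hγb z) hγ0 j hjθ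
      exact ⟨j2, hj2θ, hsub.trans hsub2⟩
    choose j hjθ hjsub using hj
    have hθT : #η.ToType < θ := by rw [Cardinal.mk_toType]; exact hηcard
    obtain ⟨jst, hjstθ, hjstb⟩ := boundU hθ hθT j hjθ
    refine ⟨jst, hjstθ, fun y hy => ?_⟩
    obtain ⟨z, hz⟩ := hcover y hy.2
    exact hD.2.1 γ0 hγ0 (j z) jst (hjstb z) hjstθ (hjsub z ⟨hy.1, hz⟩)

end Aux

/-- If `D` is a locally downward coherent `θ`-covering matrix for `lam` and
`κ < lam` is either `θ^{+η}` with `η < θ` or satisfies `κ ^ θ < lam`, then for every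
`Y ⊆ lam` with `|Y| = κ` there is `γ_Y < lam` as in local downward coherence. -/
theorem stmt11 (θ lam : Cardinal.{u}) (hθ : θ.IsRegular) (hlam : lam.IsRegular) (hθlam : θ < lam)
    (D : Ordinal → Ordinal → Set Ordinal) (hD : IsCoveringMatrix θ lam D)
    (hldc : LocallyDownwardCoherent θ lam D) (κ : Cardinal) (hκ : κ < lam)
    (hyp : (∃ η < θ.ord, κ = iterSucc θ η) ∨ κ ^ θ < lam) :
    ∀ Y : Set Ordinal.{u}, Y ⊆ Set.Iio lam.ord → #Y = Cardinal.lift.{u + 1} κ →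
      ∃ γY < lam.ord, ∀ i < θ.ord, ∀ β < lam.ord, ∃ j < θ.ord,
        D i β ∩ Y ⊆ D j γY := by
  intro Y hYsub hYcard
  rcases hyp with ⟨η, hηθ, hκη⟩ | hpow
  · exact mainA θ lam hθ hlam hθlam D hD hldc η hηθ (hκη ▸ hκ) Y hYsub
      (by rw [hYcard, hκη])
  · by_cases hκθ : κ ≤ θ
    · obtain ⟨γX, hγX, hprop⟩ := hldc Y hYsub
        (by rw [hYcard]; exact Cardinal.lift_le.mpr hκθ)
      refine ⟨γX, hγX, fun i hi β hβ => ?_⟩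
      obtain ⟨j, hj, hs⟩ := hprop β hβ i hi
      exact ⟨j, hj, fun x hx => (hs ⟨hx.2, hx.1⟩).2⟩
    · have hθκ : θ < κ := not_le.mp hκθ
      have hκinf : ℵ₀ ≤ κ := hθ.aleph0_le.trans hθκ.le
      classical
      haveI : IsWellOrder θ.ord.ToType (· < ·) := isWellOrder_lt
      have hmap : ∀ s : {X : Set Ordinal.{u} // X ⊆ Y ∧ #X ≤ Cardinal.lift.{u + 1} θ},
          ∃ f : θ.ord.ToType → Option ↥Y,
          ∀ z : Ordinal.{u}, z ∈ s.1 ↔ ∃ t, ∃ h : z ∈ Y, f t = some ⟨z, h⟩ := by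
        intro s
        have hemb : Nonempty (↥s.1 ↪ θ.ord.ToType) := by
          rw [← Cardinal.lift_mk_le']
          rw [Cardinal.lift_id'.{u, u + 1}, Cardinal.mk_toType, Cardinal.card_ord]
          exact s.2.2
        obtain ⟨g⟩ := hemb
        refine ⟨fun t => if h : ∃ x : ↥s.1, g x = t then
          some ⟨h.choose.1, s.2.1 h.choose.2⟩ else none, fun z => ?_⟩
        constructor
        · intro hz
          refine ⟨g ⟨z, hz⟩, s.2.1 hz, ?_⟩
          have hex : ∃ x : ↥s.1, g x = g ⟨z, hz⟩ := ⟨⟨z, hz⟩, rfl⟩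
          simp only [dif_pos hex]
          have hch : hex.choose = ⟨z, hz⟩ := g.injective hex.choose_spec
          exact Option.some_inj.mpr (Subtype.ext (by rw [hch]))
        · rintro ⟨t, h, hft⟩
          by_cases hex : ∃ x : ↥s.1, g x = t
          · simp only [dif_pos hex] at hft
            have hval : (hex.choose.1 : Ordinal) = z :=
              congrArg Subtype.val (Option.some_inj.mp hft)
            rw [← hval]; exact hex.choose.2
          · simp only [dif_neg hex] at hft; simp at hft
      choose F hF using hmap
      have hinj : Function.Injective F := by
        intro s1 s2 h12
        apply Subtype.ext
        ext z
        rw [hF s1 z, hF s2 z, h12]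
      have hSle : #{X : Set Ordinal.{u} // X ⊆ Y ∧ #X ≤ Cardinal.lift.{u + 1} θ} ≤
          Cardinal.lift.{u + 1} (κ ^ θ) := by
        have h0 := Cardinal.mk_le_of_injective hinj
        have h1 : #(θ.ord.ToType → Option ↥Y) = (#Y + 1) ^ Cardinal.lift.{u + 1} θ := by
          rw [Cardinal.mk_arrow, Cardinal.mk_option, Cardinal.lift_id'.{u, u + 1},
            Cardinal.mk_toType, Cardinal.card_ord]
        have h2 : (#Y + 1) ^ Cardinal.lift.{u + 1} θ = Cardinal.lift.{u + 1} (κ ^ θ) := by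
          rw [hYcard, ← Cardinal.lift_one.{u, u + 1}, ← Cardinal.lift_add,
            ← Cardinal.lift_power, Cardinal.add_one_eq hκinf]
        exact h0.trans (le_of_eq (h1.trans h2))
      have hg : ∀ s : {X : Set Ordinal.{u} // X ⊆ Y ∧ #X ≤ Cardinal.lift.{u + 1} θ},
          ∃ γ < lam.ord, ∀ β < lam.ord, ∀ i < θ.ord, ∃ j < θ.ord,
            s.1 ∩ D i β ⊆ s.1 ∩ D j γ :=
        fun s => hldc s.1 (s.2.1.trans hYsub) s.2.2
      choose g hglt hgprop using hg
      obtain ⟨γ0, hγ0, hγb⟩ := boundV hlam hpow hSle g hglt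
      refine ⟨γ0, hγ0, endgame Y ?_⟩
      intro X hXY hXc i hi β hβ hXD
      obtain ⟨j, hj, hsub⟩ := hgprop ⟨X, hXY, hXc⟩ β hβ i hi
      obtain ⟨j2, hj2, hsub2⟩ := hD.2.2 (g ⟨X, hXY, hXc⟩) γ0 (hγb _) hγ0 j hj
      exact ⟨j2, hj2, fun x hx => hsub2 ((hsub ⟨hx, hXD hx⟩).2)⟩

end
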